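/- Define G*ₙ(q,s) as the generating function of the system Gₙ: Σ_{t=i}^{n} a_t ≥ Σ_{t=i}^{n} b_t for 1 ≤ i ≤ n with all aᵢ, bᵢ ≥ 0, weighted by q^{Σᵢ i(aᵢ+bᵢ)} except that aₙ is weighted by s instead of qⁿ (i.e. G*ₙ(q,s) = Gₙ(q,q,q²,q²,...,s,qⁿ)). Then G*ₙ(q,s) = 1/((1−s)(1−sq)(q;q)_{n−1}(q²;q)_{n−1}). -/

import Mathlib

noncomputable section
open Classical

/-- `G*ₙ(q,s) = Gₙ(q,q,q²,q²,…,q^{n−1},q^{n−1},s,qⁿ)`: the generating function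
of the triangular system `Σ_{t=i}^{n} a_t ≥ Σ_{t=i}^{n} b_t` (`1 ≤ i ≤ n`,
all `aᵢ,bᵢ ≥ 0`), where `aᵢ` and `bᵢ` are weighted by `qⁱ` except that `aₙ` is
weighted by `s`.  Variable `0` is `q` and variable `1` is `s`; the coefficient
of `q^M s^K` counts solutions with `aₙ = K` and
`Σ_{i=1}^{n−1} i·aᵢ + Σ_{i=1}^{n} i·bᵢ = M`. -/
def Gstar (n : ℕ) : MvPowerSeries (Fin 2) ℤ :=
  fun d => (Nat.card {p : (Fin n → ℕ) × (Fin n → ℕ) //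
    (∀ i : Fin n, ∑ t ∈ Finset.univ.filter (fun t => i ≤ t), p.2 t ≤
                  ∑ t ∈ Finset.univ.filter (fun t => i ≤ t), p.1 t) ∧
    (∀ h : 0 < n, p.1 ⟨n - 1, by omega⟩ = d 1) ∧
    (∑ i ∈ Finset.univ.filter (fun i : Fin n => (i : ℕ) + 1 < n),
        ((i : ℕ) + 1) * p.1 i) + (∑ i : Fin n, ((i : ℕ) + 1) * p.2 i) = d 0} : ℤ)

/-- tail sum -/
def tl {m : ℕ} (a : Fin m → ℕ) (i : Fin m) : ℕ := ∑ t : Fin m, if i ≤ t then a t else 0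

/-- weight -/
def wt {m : ℕ} (a : Fin m → ℕ) : ℕ := ∑ i : Fin m, ((i : ℕ) + 1) * a i

lemma tl_snoc_castSucc {k : ℕ} (a : Fin k → ℕ) (v : ℕ) (i : Fin k) :
    tl (Fin.snoc a v) i.castSucc = tl a i + v := by
  unfold tl
  rw [Fin.sum_univ_castSucc]
  simp [Fin.castSucc_le_castSucc_iff, Fin.le_last]

lemma tl_snoc_last {k : ℕ} (a : Fin k → ℕ) (v : ℕ) :
    tl (Fin.snoc a v) (Fin.last k) = v := by
  unfold tl
  rw [Fin.sum_univ_castSucc]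
  have h : ∀ t : Fin k, ¬ (Fin.last k ≤ t.castSucc) := by
    intro t
    exact not_le.2 t.castSucc_lt_last
  simp only [Fin.snoc_last, Fin.snoc_castSucc]
  rw [Finset.sum_eq_zero (fun t _ => by simp [h t]), if_pos le_rfl, zero_add]

lemma tl_castSucc {k : ℕ} (a : Fin (k+1) → ℕ) (j : Fin k) :
    tl a j.castSucc = tl (Fin.init a) j + a (Fin.last k) := by
  conv_lhs => rw [← Fin.snoc_init_self a]
  rw [tl_snoc_castSucc]

lemma tl_last {k : ℕ} (a : Fin (k+1) → ℕ) :
    tl a (Fin.last k) = a (Fin.last k) := by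
  conv_lhs => rw [← Fin.snoc_init_self a]
  rw [tl_snoc_last]

lemma wt_snoc {k : ℕ} (a : Fin k → ℕ) (v : ℕ) :
    wt (Fin.snoc a v) = wt a + (k+1) * v := by
  unfold wt
  rw [Fin.sum_univ_castSucc]
  simp

lemma wt_eq_init {k : ℕ} (a : Fin (k+1) → ℕ) :
    wt a = wt (Fin.init a) + (k+1) * a (Fin.last k) := by
  conv_lhs => rw [← Fin.snoc_init_self a]
  rw [wt_snoc]

lemma coeff_le_wt {m : ℕ} (a : Fin m → ℕ) (i : Fin m) : ((i:ℕ)+1) * a i ≤ wt a :=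
  Finset.single_le_sum (f := fun i : Fin m => ((i:ℕ)+1) * a i) (fun _ _ => Nat.zero_le _)
    (Finset.mem_univ i)

lemma le_wt {m : ℕ} (a : Fin m → ℕ) (i : Fin m) : a i ≤ wt a :=
  le_trans (Nat.le_mul_of_pos_left _ (Nat.succ_pos _)) (coeff_le_wt a i)

lemma last_le_tl {k : ℕ} (a : Fin (k+1) → ℕ) (i : Fin (k+1)) :
    a (Fin.last k) ≤ tl a i := by
  unfold tl
  have := Finset.single_le_sum (f := fun t => if i ≤ t then a t else 0)
    (fun (t : Fin (k+1)) _ => by positivity) (Finset.mem_univ (Fin.last k))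
  simpa [Fin.le_last] using this

/-- The solution set of `B_i ≤ A_i + K` with weight `M`. -/
abbrev USol (m M K : ℕ) : Type :=
  {p : (Fin m → ℕ) × (Fin m → ℕ) //
    (∀ i, tl p.2 i ≤ tl p.1 i + K) ∧ wt p.1 + wt p.2 = M}

/-- Same, with additionally `b_last = 0`. -/
abbrev WSol (k M K : ℕ) : Type :=
  {p : (Fin (k+1) → ℕ) × (Fin (k+1) → ℕ) //
    ((∀ i, tl p.2 i ≤ tl p.1 i + K) ∧ wt p.1 + wt p.2 = M) ∧ p.2 (Fin.last k) = 0}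

instance USol.finite (m M K : ℕ) : Finite (USol m M K) := by
  have key : ∀ (p : USol m M K) (i : Fin m), p.1.1 i < M + 1 ∧ p.1.2 i < M + 1 := by
    rintro ⟨⟨a, b⟩, h1, h2⟩ i
    dsimp only at h2 ⊢
    have ha := le_wt a i
    have hb := le_wt b i
    omega
  apply Finite.of_injective
    (f := fun p : USol m M K =>
      ((fun i => (⟨p.1.1 i, (key p i).1⟩ : Fin (M+1))),
       (fun i => (⟨p.1.2 i, (key p i).2⟩ : Fin (M+1)))))
  rintro p q h
  apply Subtype.ext
  have h1 := congrArg Prod.fst h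
  have h2 := congrArg Prod.snd h
  simp only at h1 h2
  apply Prod.ext
  · funext i; exact congrArg Fin.val (congrFun h1 i)
  · funext i; exact congrArg Fin.val (congrFun h2 i)

instance WSol.finite (k M K : ℕ) : Finite (WSol k M K) := by
  have : Function.Injective (fun p : WSol k M K => (⟨p.1, p.2.1⟩ : USol (k+1) M K)) :=
    fun p q h => Subtype.ext (congrArg (fun x : USol (k+1) M K => x.val) h)
  exact Finite.of_injective _ this

lemma card_split {α : Type} [Finite α] (p : α → Prop) :
    Nat.card α = Nat.card {x // p x} + Nat.card {x // ¬ p x} := by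
  rw [← Nat.card_sum]
  exact (Nat.card_congr (Equiv.sumCompl p)).symm

lemma card_fiber_sum {α : Type} [Finite α] (f : α → ℕ) (n : ℕ) (h : ∀ x, f x < n) :
    Nat.card α = ∑ v ∈ Finset.range n, Nat.card {x : α // f x = v} := by
  cases nonempty_fintype α
  rw [Nat.card_eq_fintype_card, ← Finset.card_univ,
    Finset.card_eq_sum_card_fiberwise (f := f) (fun x _ => Finset.mem_range.2 (h x))]
  refine Finset.sum_congr rfl (fun v _ => ?_)
  rw [Nat.card_eq_fintype_card, Fintype.card_subtype]
/-- Solution sets of the `Gstar` system, nice form. -/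
abbrev GSolN (k M K : ℕ) : Type :=
  {p : (Fin (k+1) → ℕ) × (Fin (k+1) → ℕ) //
    (∀ i, tl p.2 i ≤ tl p.1 i) ∧ p.1 (Fin.last k) = K ∧
      wt (Fin.init p.1) + wt p.2 = M}

lemma gwt_eq {k : ℕ} (a : Fin (k+1) → ℕ) :
    (∑ i ∈ Finset.univ.filter (fun i : Fin (k+1) => (i : ℕ) + 1 < k + 1),
      ((i : ℕ) + 1) * a i) = wt (Fin.init a) := by
  rw [Finset.sum_filter, Fin.sum_univ_castSucc]
  have hlast : ¬ ((Fin.last k : ℕ) + 1 < k + 1) := by simp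
  rw [if_neg hlast, add_zero]
  unfold wt
  refine Finset.sum_congr rfl (fun i _ => ?_)
  have hlt : ((i.castSucc : ℕ) + 1 < k + 1) := by
    have h := i.is_lt
    simp only [Fin.coe_castSucc]
    omega
  rw [if_pos hlt]
  rfl

lemma filtsum_eq_tl {m : ℕ} (a : Fin m → ℕ) (i : Fin m) :
    ∑ t ∈ Finset.univ.filter (fun t => i ≤ t), a t = tl a i := by
  rw [Finset.sum_filter]; rfl

/-- the verbatim `Gstar` solution set has the same cardinality as `GSolN`. -/
lemma card_GSol (k M K : ℕ) :
    Nat.card {p : (Fin (k+1) → ℕ) × (Fin (k+1) → ℕ) //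
      (∀ i : Fin (k+1), ∑ t ∈ Finset.univ.filter (fun t => i ≤ t), p.2 t ≤
                    ∑ t ∈ Finset.univ.filter (fun t => i ≤ t), p.1 t) ∧
      (∀ _ : 0 < k+1, p.1 ⟨k+1 - 1, by omega⟩ = K) ∧
      (∑ i ∈ Finset.univ.filter (fun i : Fin (k+1) => (i : ℕ) + 1 < k+1),
          ((i : ℕ) + 1) * p.1 i) + (∑ i : Fin (k+1), ((i : ℕ) + 1) * p.2 i) = M} =
    Nat.card (GSolN k M K) := by
  apply Nat.card_congr
  apply Equiv.subtypeEquivRight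
  intro p
  have hidx : (⟨k+1-1, by omega⟩ : Fin (k+1)) = Fin.last k := by
    apply Fin.ext; simp [Fin.val_last]
  constructor
  · rintro ⟨h1, h2, h3⟩
    refine ⟨fun i => by rw [← filtsum_eq_tl, ← filtsum_eq_tl]; exact h1 i, ?_, ?_⟩
    · rw [← hidx]; exact h2 (by omega)
    · rw [← gwt_eq]; exact h3
  · rintro ⟨h1, h2, h3⟩
    refine ⟨fun i => by rw [filtsum_eq_tl, filtsum_eq_tl]; exact h1 i, ?_, ?_⟩
    · intro _; rw [hidx]; exact h2
    · rw [gwt_eq]; exact h3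

/-! ### the equivalences -/

lemma snoc_init_eq {k : ℕ} (a : Fin (k+1) → ℕ) (v : ℕ) (h : a (Fin.last k) = v) :
    (Fin.snoc (Fin.init a) v : Fin (k+1) → ℕ) = a := by
  rw [← h, Fin.snoc_init_self]

def equivGdrop (k M K : ℕ) :
    {x : GSolN k M K // x.1.2 (Fin.last k) = 0} ≃ USol k M K where
  toFun x := ⟨(Fin.init x.1.1.1, Fin.init x.1.1.2), by
    have hc := x.1.2.1
    have hK := x.1.2.2.1
    have hw := x.1.2.2.2
    have hb := x.2
    dsimp only
    constructor
    · intro j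
      have h := hc j.castSucc
      rw [tl_castSucc, tl_castSucc, hK, hb] at h
      omega
    · rw [wt_eq_init x.1.1.2, hb] at hw
      omega⟩
  invFun u := ⟨⟨(Fin.snoc u.1.1 K, Fin.snoc u.1.2 0), by
      have hc := u.2.1
      have hw := u.2.2
      dsimp only
      refine ⟨?_, ?_, ?_⟩
      · intro i
        induction i using Fin.lastCases with
        | last => rw [tl_snoc_last, tl_snoc_last]; omega
        | cast j => rw [tl_snoc_castSucc, tl_snoc_castSucc]; have := hc j; omega
      · rw [Fin.snoc_last]
      · rw [Fin.init_snoc, wt_snoc]; omega⟩,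
    by simp⟩
  left_inv x := by
    apply Subtype.ext; apply Subtype.ext; apply Prod.ext
    · exact snoc_init_eq _ K x.1.2.2.1
    · exact snoc_init_eq _ 0 x.2
  right_inv u := by
    apply Subtype.ext; apply Prod.ext
    · show (Fin.init ((Fin.snoc u.1.1 K : Fin (k+1) → ℕ))) = u.1.1
      rw [Fin.init_snoc]
    · show (Fin.init ((Fin.snoc u.1.2 0 : Fin (k+1) → ℕ))) = u.1.2
      rw [Fin.init_snoc]

def equivGdec (k M' K' : ℕ) :
    {x : GSolN k (M' + (k+1)) (K' + 1) // ¬ x.1.2 (Fin.last k) = 0} ≃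
      GSolN k M' K' where
  toFun x := ⟨(Fin.snoc (Fin.init x.1.1.1) K',
               Fin.snoc (Fin.init x.1.1.2) (x.1.1.2 (Fin.last k) - 1)), by
    have hc := x.1.2.1
    have hK := x.1.2.2.1
    have hw := x.1.2.2.2
    have hb := x.2
    have hlast := hc (Fin.last k)
    rw [tl_last, tl_last, hK] at hlast
    dsimp only
    refine ⟨?_, ?_, ?_⟩
    · intro i
      induction i using Fin.lastCases with
      | last => rw [tl_snoc_last, tl_snoc_last]; omega
      | cast j =>
        have h := hc j.castSucc
        rw [tl_castSucc, tl_castSucc, hK] at h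
        rw [tl_snoc_castSucc, tl_snoc_castSucc]
        omega
    · rw [Fin.snoc_last]
    · rw [Fin.init_snoc, wt_snoc]
      rw [wt_eq_init x.1.1.2] at hw
      obtain ⟨c, hcl⟩ : ∃ c, x.1.1.2 (Fin.last k) = c + 1 :=
        ⟨x.1.1.2 (Fin.last k) - 1, by omega⟩
      rw [hcl] at hw ⊢
      rw [Nat.mul_succ] at hw
      simp only [Nat.add_sub_cancel]
      omega⟩
  invFun y := ⟨⟨(Fin.snoc (Fin.init y.1.1) (K' + 1),
                Fin.snoc (Fin.init y.1.2) (y.1.2 (Fin.last k) + 1)), by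
      have hc := y.2.1
      have hK := y.2.2.1
      have hw := y.2.2.2
      have hlast := hc (Fin.last k)
      rw [tl_last, tl_last, hK] at hlast
      dsimp only
      refine ⟨?_, ?_, ?_⟩
      · intro i
        induction i using Fin.lastCases with
        | last => rw [tl_snoc_last, tl_snoc_last]; omega
        | cast j =>
          have h := hc j.castSucc
          rw [tl_castSucc, tl_castSucc, hK] at h
          rw [tl_snoc_castSucc, tl_snoc_castSucc]
          omega
      · rw [Fin.snoc_last]
      · rw [Fin.init_snoc, wt_snoc]
        rw [wt_eq_init y.1.2] at hw
        rw [Nat.mul_succ]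
        omega⟩,
    by simp⟩
  left_inv x := by
    apply Subtype.ext; apply Subtype.ext; apply Prod.ext
    · show (Fin.snoc (Fin.init ((Fin.snoc (Fin.init x.1.1.1) K' : Fin (k+1) → ℕ)))
        (K'+1) : Fin (k+1) → ℕ) = x.1.1.1
      rw [Fin.init_snoc]
      exact snoc_init_eq _ _ x.1.2.2.1
    · show (Fin.snoc
        (Fin.init ((Fin.snoc (Fin.init x.1.1.2) (x.1.1.2 (Fin.last k) - 1) : Fin (k+1) → ℕ)))
        ((Fin.snoc (Fin.init x.1.1.2) (x.1.1.2 (Fin.last k) - 1) : Fin (k+1) → ℕ)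
          (Fin.last k) + 1) : Fin (k+1) → ℕ) = x.1.1.2
      rw [Fin.init_snoc, Fin.snoc_last]
      have h1 : x.1.1.2 (Fin.last k) - 1 + 1 = x.1.1.2 (Fin.last k) := by
        have := x.2; omega
      rw [h1]
      exact Fin.snoc_init_self _
  right_inv y := by
    apply Subtype.ext; apply Prod.ext
    · show (Fin.snoc (Fin.init ((Fin.snoc (Fin.init y.1.1) (K'+1) : Fin (k+1) → ℕ)))
        K' : Fin (k+1) → ℕ) = y.1.1
      rw [Fin.init_snoc]
      exact snoc_init_eq _ _ y.2.2.1
    · show (Fin.snoc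
        (Fin.init ((Fin.snoc (Fin.init y.1.2) (y.1.2 (Fin.last k) + 1) : Fin (k+1) → ℕ)))
        ((Fin.snoc (Fin.init y.1.2) (y.1.2 (Fin.last k) + 1) : Fin (k+1) → ℕ)
          (Fin.last k) - 1) : Fin (k+1) → ℕ) = y.1.2
      rw [Fin.init_snoc, Fin.snoc_last]
      simp only [Nat.add_sub_cancel]
      exact Fin.snoc_init_self _

instance GSolN.finite (k M K : ℕ) : Finite (GSolN k M K) := by
  have key : ∀ (p : GSolN k M K) (i : Fin (k+1)),
      p.1.1 i < M + K + 1 ∧ p.1.2 i < M + K + 1 := by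
    intro p i
    have hw := p.2.2.2
    have hb := le_wt p.1.2 i
    constructor
    · induction i using Fin.lastCases with
      | last => rw [p.2.2.1]; omega
      | cast j =>
        have h := le_wt (Fin.init p.1.1) j
        have h2 : Fin.init p.1.1 j = p.1.1 j.castSucc := rfl
        omega
    · omega
  apply Finite.of_injective
    (f := fun p : GSolN k M K =>
      ((fun i => (⟨p.1.1 i, (key p i).1⟩ : Fin (M+K+1))),
       (fun i => (⟨p.1.2 i, (key p i).2⟩ : Fin (M+K+1)))))
  rintro p q h
  apply Subtype.ext
  have h1 := congrArg Prod.fst h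
  have h2 := congrArg Prod.snd h
  simp only at h1 h2
  apply Prod.ext
  · funext i; exact congrArg Fin.val (congrFun h1 i)
  · funext i; exact congrArg Fin.val (congrFun h2 i)

lemma Gdec_empty (k M K : ℕ) (h : ¬(k+1 ≤ M ∧ 1 ≤ K)) :
    IsEmpty {x : GSolN k M K // ¬ x.1.2 (Fin.last k) = 0} := by
  constructor
  intro x
  have hc := x.1.2.1
  have hK := x.1.2.2.1
  have hw := x.1.2.2.2
  have hb := x.2
  have hlast := hc (Fin.last k)
  rw [tl_last, tl_last, hK] at hlast
  have h2 := coeff_le_wt x.1.1.2 (Fin.last k)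
  rw [Fin.val_last] at h2
  have h3 : k + 1 ≤ (k+1) * x.1.1.2 (Fin.last k) :=
    Nat.le_mul_of_pos_right _ (by omega)
  omega

lemma N1 (k M K : ℕ) :
    Nat.card (GSolN k M K) =
      (if k+1 ≤ M ∧ 1 ≤ K then Nat.card (GSolN k (M-(k+1)) (K-1)) else 0)
        + Nat.card (USol k M K) := by
  rw [card_split (fun x : GSolN k M K => x.1.2 (Fin.last k) = 0), add_comm]
  congr 1
  · split_ifs with hg
    · obtain ⟨M'', rfl⟩ : ∃ M'', M = M'' + (k+1) := ⟨M - (k+1), by omega⟩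
      obtain ⟨K'', rfl⟩ : ∃ K'', K = K'' + 1 := ⟨K - 1, by omega⟩
      rw [Nat.add_sub_cancel, Nat.add_sub_cancel]
      exact Nat.card_congr (equivGdec k M'' K'')
    · haveI := Gdec_empty k M K hg
      exact Nat.card_of_isEmpty
  · exact Nat.card_congr (equivGdrop k M K)
/-! ### U/W side equivalences -/

lemma wt_fin0 (a : Fin 0 → ℕ) : wt a = 0 := by simp [wt]

lemma N0 (M K : ℕ) : Nat.card (USol 0 M K) = if M = 0 then 1 else 0 := by
  split_ifs with h
  · subst h
    haveI : Unique (USol 0 0 K) :=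
      { default := ⟨(fun i => i.elim0, fun i => i.elim0), by
          refine ⟨fun i => i.elim0, ?_⟩
          simp [wt_fin0]⟩
        uniq := fun x => Subtype.ext (Prod.ext
          (funext fun i => i.elim0) (funext fun i => i.elim0)) }
    exact Nat.card_unique
  · haveI : IsEmpty (USol 0 M K) := by
      constructor
      intro x
      have hw := x.2.2
      rw [wt_fin0, wt_fin0] at hw
      omega
    exact Nat.card_of_isEmpty

def equivUW (k M K : ℕ) :
    {x : USol (k+1) M K // x.1.2 (Fin.last k) = 0} ≃ WSol k M K where
  toFun x := ⟨x.1.1, ⟨x.1.2, x.2⟩⟩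
  invFun y := ⟨⟨y.1, y.2.1⟩, y.2.2⟩
  left_inv x := rfl
  right_inv y := rfl

def equivUdecB (k M' K' : ℕ) :
    {x : USol (k+1) (M' + (k+1)) (K'+1) // ¬ x.1.2 (Fin.last k) = 0} ≃
      USol (k+1) M' K' where
  toFun x := ⟨(x.1.1.1, Fin.snoc (Fin.init x.1.1.2) (x.1.1.2 (Fin.last k) - 1)), by
    have hc := x.1.2.1
    have hw := x.1.2.2
    have hb := x.2
    dsimp only
    constructor
    · intro i
      induction i using Fin.lastCases with
      | last =>
        have h := hc (Fin.last k)
        rw [tl_last, tl_last] at h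
        rw [tl_snoc_last, tl_last]
        omega
      | cast j =>
        have h := hc j.castSucc
        rw [tl_castSucc (x.1.1.2)] at h
        rw [tl_snoc_castSucc]
        omega
    · rw [wt_snoc]
      rw [wt_eq_init x.1.1.2] at hw
      obtain ⟨c, hcl⟩ : ∃ c, x.1.1.2 (Fin.last k) = c + 1 :=
        ⟨x.1.1.2 (Fin.last k) - 1, by omega⟩
      rw [hcl] at hw ⊢
      rw [Nat.mul_succ] at hw
      simp only [Nat.add_sub_cancel]
      omega⟩
  invFun y := ⟨⟨(y.1.1, Fin.snoc (Fin.init y.1.2) (y.1.2 (Fin.last k) + 1)), by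
      have hc := y.2.1
      have hw := y.2.2
      dsimp only
      constructor
      · intro i
        induction i using Fin.lastCases with
        | last =>
          have h := hc (Fin.last k)
          rw [tl_last, tl_last] at h
          rw [tl_snoc_last, tl_last]
          omega
        | cast j =>
          have h := hc j.castSucc
          rw [tl_castSucc (y.1.2)] at h
          rw [tl_snoc_castSucc]
          omega
      · rw [wt_snoc]
        rw [wt_eq_init y.1.2] at hw
        rw [Nat.mul_succ]
        omega⟩,
    by simp⟩
  left_inv x := by
    apply Subtype.ext; apply Subtype.ext; apply Prod.ext
    · rfl
    · show (Fin.snoc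
        (Fin.init ((Fin.snoc (Fin.init x.1.1.2) (x.1.1.2 (Fin.last k) - 1) : Fin (k+1) → ℕ)))
        ((Fin.snoc (Fin.init x.1.1.2) (x.1.1.2 (Fin.last k) - 1) : Fin (k+1) → ℕ)
          (Fin.last k) + 1) : Fin (k+1) → ℕ) = x.1.1.2
      rw [Fin.init_snoc, Fin.snoc_last]
      have h1 : x.1.1.2 (Fin.last k) - 1 + 1 = x.1.1.2 (Fin.last k) := by
        have := x.2; omega
      rw [h1]
      exact Fin.snoc_init_self _
  right_inv y := by
    apply Subtype.ext; apply Prod.ext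
    · rfl
    · show (Fin.snoc
        (Fin.init ((Fin.snoc (Fin.init y.1.2) (y.1.2 (Fin.last k) + 1) : Fin (k+1) → ℕ)))
        ((Fin.snoc (Fin.init y.1.2) (y.1.2 (Fin.last k) + 1) : Fin (k+1) → ℕ)
          (Fin.last k) - 1) : Fin (k+1) → ℕ) = y.1.2
      rw [Fin.init_snoc, Fin.snoc_last]
      simp only [Nat.add_sub_cancel]
      exact Fin.snoc_init_self _

def equivUdecAB (k M' : ℕ) :
    {x : USol (k+1) (M' + ((k+1) + (k+1))) 0 // ¬ x.1.2 (Fin.last k) = 0} ≃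
      USol (k+1) M' 0 where
  toFun x := ⟨(Fin.snoc (Fin.init x.1.1.1) (x.1.1.1 (Fin.last k) - 1),
               Fin.snoc (Fin.init x.1.1.2) (x.1.1.2 (Fin.last k) - 1)), by
    have hc := x.1.2.1
    have hw := x.1.2.2
    have hb := x.2
    have hlast := hc (Fin.last k)
    rw [tl_last, tl_last] at hlast
    dsimp only
    constructor
    · intro i
      induction i using Fin.lastCases with
      | last =>
        rw [tl_snoc_last, tl_snoc_last]
        omega
      | cast j =>
        have h := hc j.castSucc
        rw [tl_castSucc (x.1.1.2), tl_castSucc (x.1.1.1)] at h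
        rw [tl_snoc_castSucc, tl_snoc_castSucc]
        omega
    · rw [wt_snoc, wt_snoc]
      rw [wt_eq_init x.1.1.2, wt_eq_init x.1.1.1] at hw
      obtain ⟨c, hcl⟩ : ∃ c, x.1.1.2 (Fin.last k) = c + 1 :=
        ⟨x.1.1.2 (Fin.last k) - 1, by omega⟩
      obtain ⟨e, hel⟩ : ∃ e, x.1.1.1 (Fin.last k) = e + 1 :=
        ⟨x.1.1.1 (Fin.last k) - 1, by omega⟩
      rw [hcl, hel] at hw ⊢
      rw [Nat.mul_succ, Nat.mul_succ] at hw
      simp only [Nat.add_sub_cancel]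
      omega⟩
  invFun y := ⟨⟨(Fin.snoc (Fin.init y.1.1) (y.1.1 (Fin.last k) + 1),
                Fin.snoc (Fin.init y.1.2) (y.1.2 (Fin.last k) + 1)), by
      have hc := y.2.1
      have hw := y.2.2
      have hlast := hc (Fin.last k)
      rw [tl_last, tl_last] at hlast
      dsimp only
      constructor
      · intro i
        induction i using Fin.lastCases with
        | last =>
          rw [tl_snoc_last, tl_snoc_last]
          omega
        | cast j =>
          have h := hc j.castSucc
          rw [tl_castSucc (y.1.2), tl_castSucc (y.1.1)] at h
          rw [tl_snoc_castSucc, tl_snoc_castSucc]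
          omega
      · rw [wt_snoc, wt_snoc]
        rw [wt_eq_init y.1.2, wt_eq_init y.1.1] at hw
        rw [Nat.mul_succ, Nat.mul_succ]
        omega⟩,
    by simp⟩
  left_inv x := by
    apply Subtype.ext; apply Subtype.ext; apply Prod.ext
    · show (Fin.snoc
        (Fin.init ((Fin.snoc (Fin.init x.1.1.1) (x.1.1.1 (Fin.last k) - 1) : Fin (k+1) → ℕ)))
        ((Fin.snoc (Fin.init x.1.1.1) (x.1.1.1 (Fin.last k) - 1) : Fin (k+1) → ℕ)
          (Fin.last k) + 1) : Fin (k+1) → ℕ) = x.1.1.1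
      rw [Fin.init_snoc, Fin.snoc_last]
      have hc := x.1.2.1
      have hlast := hc (Fin.last k)
      rw [tl_last, tl_last] at hlast
      have h1 : x.1.1.1 (Fin.last k) - 1 + 1 = x.1.1.1 (Fin.last k) := by
        have := x.2; omega
      rw [h1]
      exact Fin.snoc_init_self _
    · show (Fin.snoc
        (Fin.init ((Fin.snoc (Fin.init x.1.1.2) (x.1.1.2 (Fin.last k) - 1) : Fin (k+1) → ℕ)))
        ((Fin.snoc (Fin.init x.1.1.2) (x.1.1.2 (Fin.last k) - 1) : Fin (k+1) → ℕ)
          (Fin.last k) + 1) : Fin (k+1) → ℕ) = x.1.1.2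
      rw [Fin.init_snoc, Fin.snoc_last]
      have h1 : x.1.1.2 (Fin.last k) - 1 + 1 = x.1.1.2 (Fin.last k) := by
        have := x.2; omega
      rw [h1]
      exact Fin.snoc_init_self _
  right_inv y := by
    apply Subtype.ext; apply Prod.ext
    · show (Fin.snoc
        (Fin.init ((Fin.snoc (Fin.init y.1.1) (y.1.1 (Fin.last k) + 1) : Fin (k+1) → ℕ)))
        ((Fin.snoc (Fin.init y.1.1) (y.1.1 (Fin.last k) + 1) : Fin (k+1) → ℕ)
          (Fin.last k) - 1) : Fin (k+1) → ℕ) = y.1.1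
      rw [Fin.init_snoc, Fin.snoc_last]
      simp only [Nat.add_sub_cancel]
      exact Fin.snoc_init_self _
    · show (Fin.snoc
        (Fin.init ((Fin.snoc (Fin.init y.1.2) (y.1.2 (Fin.last k) + 1) : Fin (k+1) → ℕ)))
        ((Fin.snoc (Fin.init y.1.2) (y.1.2 (Fin.last k) + 1) : Fin (k+1) → ℕ)
          (Fin.last k) - 1) : Fin (k+1) → ℕ) = y.1.2
      rw [Fin.init_snoc, Fin.snoc_last]
      simp only [Nat.add_sub_cancel]
      exact Fin.snoc_init_self _

def equivWdropA (k M K : ℕ) :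
    {x : WSol k M K // x.1.1 (Fin.last k) = 0} ≃ USol k M K where
  toFun x := ⟨(Fin.init x.1.1.1, Fin.init x.1.1.2), by
    have hc := x.1.2.1.1
    have hw := x.1.2.1.2
    have hb := x.1.2.2
    have ha := x.2
    dsimp only
    constructor
    · intro j
      have h := hc j.castSucc
      rw [tl_castSucc (x.1.1.2), tl_castSucc (x.1.1.1), ha, hb] at h
      omega
    · rw [wt_eq_init x.1.1.1, wt_eq_init x.1.1.2, ha, hb] at hw
      omega⟩
  invFun u := ⟨⟨(Fin.snoc u.1.1 0, Fin.snoc u.1.2 0), by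
      have hc := u.2.1
      have hw := u.2.2
      dsimp only
      refine ⟨⟨?_, ?_⟩, ?_⟩
      · intro i
        induction i using Fin.lastCases with
        | last => rw [tl_snoc_last, tl_snoc_last]; omega
        | cast j => rw [tl_snoc_castSucc, tl_snoc_castSucc]; have := hc j; omega
      · rw [wt_snoc, wt_snoc]; omega
      · rw [Fin.snoc_last]⟩,
    by simp⟩
  left_inv x := by
    apply Subtype.ext; apply Subtype.ext; apply Prod.ext
    · exact snoc_init_eq _ 0 x.2
    · exact snoc_init_eq _ 0 x.1.2.2
  right_inv u := by
    apply Subtype.ext; apply Prod.ext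
    · show (Fin.init ((Fin.snoc u.1.1 0 : Fin (k+1) → ℕ))) = u.1.1
      rw [Fin.init_snoc]
    · show (Fin.init ((Fin.snoc u.1.2 0 : Fin (k+1) → ℕ))) = u.1.2
      rw [Fin.init_snoc]

def equivWdecA (k M' K : ℕ) :
    {x : WSol k (M' + (k+1)) K // ¬ x.1.1 (Fin.last k) = 0} ≃ WSol k M' (K+1) where
  toFun x := ⟨(Fin.snoc (Fin.init x.1.1.1) (x.1.1.1 (Fin.last k) - 1), x.1.1.2), by
    have hc := x.1.2.1.1
    have hw := x.1.2.1.2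
    have hb := x.1.2.2
    have ha := x.2
    dsimp only
    refine ⟨⟨?_, ?_⟩, ?_⟩
    · intro i
      induction i using Fin.lastCases with
      | last =>
        rw [tl_last, tl_snoc_last, hb]
        omega
      | cast j =>
        have h := hc j.castSucc
        rw [tl_castSucc (x.1.1.1)] at h
        rw [tl_snoc_castSucc]
        omega
    · rw [wt_snoc]
      rw [wt_eq_init x.1.1.1] at hw
      obtain ⟨c, hcl⟩ : ∃ c, x.1.1.1 (Fin.last k) = c + 1 :=
        ⟨x.1.1.1 (Fin.last k) - 1, by omega⟩
      rw [hcl] at hw ⊢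
      rw [Nat.mul_succ] at hw
      simp only [Nat.add_sub_cancel]
      omega
    · exact hb⟩
  invFun y := ⟨⟨(Fin.snoc (Fin.init y.1.1) (y.1.1 (Fin.last k) + 1), y.1.2), by
      have hc := y.2.1.1
      have hw := y.2.1.2
      have hb := y.2.2
      dsimp only
      refine ⟨⟨?_, ?_⟩, ?_⟩
      · intro i
        induction i using Fin.lastCases with
        | last =>
          rw [tl_last, tl_snoc_last, hb]
          omega
        | cast j =>
          have h := hc j.castSucc
          rw [tl_castSucc (y.1.1)] at h
          rw [tl_snoc_castSucc]
          omega
      · rw [wt_snoc]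
        rw [wt_eq_init y.1.1] at hw
        rw [Nat.mul_succ]
        omega
      · exact hb⟩,
    by simp⟩
  left_inv x := by
    apply Subtype.ext; apply Subtype.ext; apply Prod.ext
    · show (Fin.snoc
        (Fin.init ((Fin.snoc (Fin.init x.1.1.1) (x.1.1.1 (Fin.last k) - 1) : Fin (k+1) → ℕ)))
        ((Fin.snoc (Fin.init x.1.1.1) (x.1.1.1 (Fin.last k) - 1) : Fin (k+1) → ℕ)
          (Fin.last k) + 1) : Fin (k+1) → ℕ) = x.1.1.1
      rw [Fin.init_snoc, Fin.snoc_last]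
      have h1 : x.1.1.1 (Fin.last k) - 1 + 1 = x.1.1.1 (Fin.last k) := by
        have := x.2; omega
      rw [h1]
      exact Fin.snoc_init_self _
    · rfl
  right_inv y := by
    apply Subtype.ext; apply Prod.ext
    · show (Fin.snoc
        (Fin.init ((Fin.snoc (Fin.init y.1.1) (y.1.1 (Fin.last k) + 1) : Fin (k+1) → ℕ)))
        ((Fin.snoc (Fin.init y.1.1) (y.1.1 (Fin.last k) + 1) : Fin (k+1) → ℕ)
          (Fin.last k) - 1) : Fin (k+1) → ℕ) = y.1.1
      rw [Fin.init_snoc, Fin.snoc_last]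
      simp only [Nat.add_sub_cancel]
      exact Fin.snoc_init_self _
    · rfl

def equivWfiber (k M' v : ℕ) :
    {x : WSol k (M' + (k+1)*v) 0 // x.1.1 (Fin.last k) = v} ≃ USol k M' v where
  toFun x := ⟨(Fin.init x.1.1.1, Fin.init x.1.1.2), by
    have hc := x.1.2.1.1
    have hw := x.1.2.1.2
    have hb := x.1.2.2
    have ha := x.2
    dsimp only
    constructor
    · intro j
      have h := hc j.castSucc
      rw [tl_castSucc (x.1.1.2), tl_castSucc (x.1.1.1), ha, hb] at h
      omega
    · rw [wt_eq_init x.1.1.1, wt_eq_init x.1.1.2, ha, hb] at hw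
      omega⟩
  invFun u := ⟨⟨(Fin.snoc u.1.1 v, Fin.snoc u.1.2 0), by
      have hc := u.2.1
      have hw := u.2.2
      dsimp only
      refine ⟨⟨?_, ?_⟩, ?_⟩
      · intro i
        induction i using Fin.lastCases with
        | last => rw [tl_snoc_last, tl_snoc_last]; omega
        | cast j => rw [tl_snoc_castSucc, tl_snoc_castSucc]; have := hc j; omega
      · rw [wt_snoc, wt_snoc]; omega
      · rw [Fin.snoc_last]⟩,
    by simp⟩
  left_inv x := by
    apply Subtype.ext; apply Subtype.ext; apply Prod.ext
    · exact snoc_init_eq _ v x.2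
    · exact snoc_init_eq _ 0 x.1.2.2
  right_inv u := by
    apply Subtype.ext; apply Prod.ext
    · show (Fin.init ((Fin.snoc u.1.1 v : Fin (k+1) → ℕ))) = u.1.1
      rw [Fin.init_snoc]
    · show (Fin.init ((Fin.snoc u.1.2 0 : Fin (k+1) → ℕ))) = u.1.2
      rw [Fin.init_snoc]

/-! ### emptiness lemmas -/

lemma UdecB_empty (k M K : ℕ) (h : M < k+1) :
    IsEmpty {x : USol (k+1) M K // ¬ x.1.2 (Fin.last k) = 0} := by
  constructor
  intro x
  have hw := x.1.2.2
  have h2 := coeff_le_wt x.1.1.2 (Fin.last k)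
  rw [Fin.val_last] at h2
  have h3 : k + 1 ≤ (k+1) * x.1.1.2 (Fin.last k) :=
    Nat.le_mul_of_pos_right _ (by have := x.2; omega)
  omega

lemma UdecAB_empty (k M : ℕ) (h : M < (k+1) + (k+1)) :
    IsEmpty {x : USol (k+1) M 0 // ¬ x.1.2 (Fin.last k) = 0} := by
  constructor
  intro x
  have hc := x.1.2.1 (Fin.last k)
  rw [tl_last, tl_last] at hc
  have hw := x.1.2.2
  have h2 := coeff_le_wt x.1.1.2 (Fin.last k)
  have h2' := coeff_le_wt x.1.1.1 (Fin.last k)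
  rw [Fin.val_last] at h2 h2'
  have h3 : k + 1 ≤ (k+1) * x.1.1.2 (Fin.last k) :=
    Nat.le_mul_of_pos_right _ (by have := x.2; omega)
  have h4 : k + 1 ≤ (k+1) * x.1.1.1 (Fin.last k) :=
    Nat.le_mul_of_pos_right _ (by have := x.2; omega)
  omega

lemma WdecA_empty (k M K : ℕ) (h : M < k+1) :
    IsEmpty {x : WSol k M K // ¬ x.1.1 (Fin.last k) = 0} := by
  constructor
  intro x
  have hw := x.1.2.1.2
  have h2 := coeff_le_wt x.1.1.1 (Fin.last k)
  rw [Fin.val_last] at h2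
  have h3 : k + 1 ≤ (k+1) * x.1.1.1 (Fin.last k) :=
    Nat.le_mul_of_pos_right _ (by have := x.2; omega)
  omega

lemma Wfiber_empty (k M v : ℕ) (h : M < (k+1) * v) :
    IsEmpty {x : WSol k M 0 // x.1.1 (Fin.last k) = v} := by
  constructor
  intro x
  have hw := x.1.2.1.2
  have h2 := coeff_le_wt x.1.1.1 (Fin.last k)
  have hv := Subtype.prop x
  rw [Fin.val_last, hv] at h2
  omega

/-! ### the counting identities -/

lemma N2a (k M K' : ℕ) :
    Nat.card (USol (k+1) M (K'+1)) =
      (if k+1 ≤ M then Nat.card (USol (k+1) (M-(k+1)) K') else 0)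
        + Nat.card (WSol k M (K'+1)) := by
  rw [card_split (fun x : USol (k+1) M (K'+1) => x.1.2 (Fin.last k) = 0), add_comm]
  congr 1
  · split_ifs with hg
    · obtain ⟨M'', rfl⟩ : ∃ M'', M = M'' + (k+1) := ⟨M - (k+1), by omega⟩
      rw [Nat.add_sub_cancel]
      exact Nat.card_congr (equivUdecB k M'' K')
    · haveI := UdecB_empty k M (K'+1) (by omega)
      exact Nat.card_of_isEmpty
  · exact Nat.card_congr (equivUW k M (K'+1))

lemma N2b (k M : ℕ) :
    Nat.card (USol (k+1) M 0) =
      Nat.card (WSol k M 0)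
        + (if (k+1)+(k+1) ≤ M then Nat.card (USol (k+1) (M-((k+1)+(k+1))) 0) else 0) := by
  rw [card_split (fun x : USol (k+1) M 0 => x.1.2 (Fin.last k) = 0)]
  congr 1
  · exact Nat.card_congr (equivUW k M 0)
  · split_ifs with hg
    · obtain ⟨M'', rfl⟩ : ∃ M'', M = M'' + ((k+1)+(k+1)) := ⟨M - ((k+1)+(k+1)), by omega⟩
      rw [Nat.add_sub_cancel]
      exact Nat.card_congr (equivUdecAB k M'')
    · haveI := UdecAB_empty k M (by omega)
      exact Nat.card_of_isEmpty

lemma N3 (k M K : ℕ) :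
    Nat.card (WSol k M K) =
      Nat.card (USol k M K)
        + (if k+1 ≤ M then Nat.card (WSol k (M-(k+1)) (K+1)) else 0) := by
  rw [card_split (fun x : WSol k M K => x.1.1 (Fin.last k) = 0)]
  congr 1
  · exact Nat.card_congr (equivWdropA k M K)
  · split_ifs with hg
    · obtain ⟨M'', rfl⟩ : ∃ M'', M = M'' + (k+1) := ⟨M - (k+1), by omega⟩
      rw [Nat.add_sub_cancel]
      exact Nat.card_congr (equivWdecA k M'' K)
    · haveI := WdecA_empty k M K (by omega)
      exact Nat.card_of_isEmpty

lemma N5 (k M : ℕ) :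
    Nat.card (WSol k M 0) =
      ∑ v ∈ Finset.range (M+1),
        (if (k+1)*v ≤ M then Nat.card (USol k (M - (k+1)*v) v) else 0) := by
  rw [card_fiber_sum (fun x : WSol k M 0 => x.1.1 (Fin.last k)) (M+1) ?bound]
  case bound =>
    intro x
    show x.1.1 (Fin.last k) < M + 1
    have hw := x.2.1.2
    have h2 := le_wt x.1.1 (Fin.last k)
    omega
  refine Finset.sum_congr rfl (fun v _ => ?_)
  split_ifs with hg
  · obtain ⟨M'', rfl⟩ : ∃ M'', M = M'' + (k+1)*v := ⟨M - (k+1)*v, by omega⟩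
    rw [Nat.add_sub_cancel]
    exact Nat.card_congr (equivWfiber k M'' v)
  · haveI := Wfiber_empty k M v (by omega)
    exact Nat.card_of_isEmpty
/-! ### power series infrastructure -/

open MvPowerSeries

def fd (x y : ℕ) : Fin 2 →₀ ℕ := Finsupp.single 0 x + Finsupp.single 1 y

@[simp] lemma fd_apply0 (x y : ℕ) : fd x y 0 = x := by
  simp [fd, Finsupp.single_apply]

@[simp] lemma fd_apply1 (x y : ℕ) : fd x y 1 = y := by
  simp [fd, Finsupp.single_apply]

lemma fin2_cases (i : Fin 2) : i = 0 ∨ i = 1 := by omega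

lemma fd_ext {d e : Fin 2 →₀ ℕ} (h0 : d 0 = e 0) (h1 : d 1 = e 1) : d = e := by
  apply Finsupp.ext
  intro i
  rcases fin2_cases i with h | h <;> subst h <;> assumption

lemma fd_add (x y x' y' : ℕ) : fd x y + fd x' y' = fd (x+x') (y+y') := by
  apply fd_ext <;> simp

lemma fd_le_iff {x y : ℕ} {d : Fin 2 →₀ ℕ} : fd x y ≤ d ↔ x ≤ d 0 ∧ y ≤ d 1 := by
  rw [Finsupp.le_def]
  constructor
  · intro h
    exact ⟨by simpa using h 0, by simpa using h 1⟩
  · rintro ⟨h0, h1⟩ i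
    rcases fin2_cases i with h | h <;> subst h <;> simpa

@[simp] lemma sub_fd_apply0 (d : Fin 2 →₀ ℕ) (x y : ℕ) : (d - fd x y) 0 = d 0 - x := by
  rw [Finsupp.tsub_apply, fd_apply0]

@[simp] lemma sub_fd_apply1 (d : Fin 2 →₀ ℕ) (x y : ℕ) : (d - fd x y) 1 = d 1 - y := by
  rw [Finsupp.tsub_apply, fd_apply1]

lemma fd_eq_zero_iff (x y : ℕ) : fd x y = 0 ↔ x = 0 ∧ y = 0 := by
  constructor
  · intro h
    constructor
    · have := congrArg (fun f : Fin 2 →₀ ℕ => f 0) h; simpa using this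
    · have := congrArg (fun f : Fin 2 →₀ ℕ => f 1) h; simpa using this
  · rintro ⟨rfl, rfl⟩
    apply fd_ext <;> simp

lemma d_eq_zero_iff (d : Fin 2 →₀ ℕ) : d = 0 ↔ d 0 = 0 ∧ d 1 = 0 := by
  constructor
  · rintro rfl; simp
  · rintro ⟨h0, h1⟩; exact fd_ext (by simpa) (by simpa)

def mon (x y : ℕ) : MvPowerSeries (Fin 2) ℤ := MvPowerSeries.monomial (fd x y) 1

lemma mon_mul_mon (x y x' y' : ℕ) : mon x y * mon x' y' = mon (x+x') (y+y') := by
  rw [mon, mon, mon, MvPowerSeries.monomial_mul_monomial, fd_add, one_mul]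

lemma X1_eq : (MvPowerSeries.X (1 : Fin 2) : MvPowerSeries (Fin 2) ℤ) = mon 0 1 := by
  have h : fd 0 1 = Finsupp.single (1 : Fin 2) 1 :=
    fd_ext (by simp [Finsupp.single_apply]) (by simp [Finsupp.single_apply])
  rw [mon, h, MvPowerSeries.X]

lemma X0_pow (j : ℕ) :
    (MvPowerSeries.X (0 : Fin 2) : MvPowerSeries (Fin 2) ℤ) ^ j = mon j 0 := by
  have h : fd j 0 = Finsupp.single (0 : Fin 2) j :=
    fd_ext (by simp [Finsupp.single_apply]) (by simp [Finsupp.single_apply])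
  rw [MvPowerSeries.X_pow_eq, mon, h]

lemma X0_eq : (MvPowerSeries.X (0 : Fin 2) : MvPowerSeries (Fin 2) ℤ) = mon 1 0 := by
  rw [← pow_one (MvPowerSeries.X (0 : Fin 2)), X0_pow]

lemma coeff_mon (d : Fin 2 →₀ ℕ) (x y : ℕ) :
    MvPowerSeries.coeff d (mon x y) = if d = fd x y then 1 else 0 := by
  rw [mon, MvPowerSeries.coeff_monomial]

lemma coeff_mon_mul (x y : ℕ) (d : Fin 2 →₀ ℕ) (F : MvPowerSeries (Fin 2) ℤ) :
    MvPowerSeries.coeff d (mon x y * F) =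
      if x ≤ d 0 ∧ y ≤ d 1 then MvPowerSeries.coeff (d - fd x y) F else 0 := by
  rw [mon, MvPowerSeries.coeff_monomial_mul]
  by_cases h : fd x y ≤ d
  · rw [if_pos h, if_pos (fd_le_iff.1 h), one_mul]
  · rw [if_neg h, if_neg (fun hc => h (fd_le_iff.2 hc))]

/-! ### the series -/

def Us (m : ℕ) : MvPowerSeries (Fin 2) ℤ := fun d => (Nat.card (USol m (d 0) (d 1)) : ℤ)

def Ws (k : ℕ) : MvPowerSeries (Fin 2) ℤ := fun d => (Nat.card (WSol k (d 0) (d 1)) : ℤ)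

def W0s (k : ℕ) : MvPowerSeries (Fin 2) ℤ :=
  fun d => if d 1 = 0 then (Nat.card (WSol k (d 0) 0) : ℤ) else 0

def Zs (m : ℕ) : MvPowerSeries (Fin 2) ℤ :=
  fun d => if d 1 = 0 then (Nat.card (USol m (d 0) 0) : ℤ) else 0

lemma coeff_Us (m : ℕ) (d : Fin 2 →₀ ℕ) :
    MvPowerSeries.coeff d (Us m) = (Nat.card (USol m (d 0) (d 1)) : ℤ) := rfl

lemma coeff_Ws (k : ℕ) (d : Fin 2 →₀ ℕ) :
    MvPowerSeries.coeff d (Ws k) = (Nat.card (WSol k (d 0) (d 1)) : ℤ) := rfl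

lemma coeff_W0s (k : ℕ) (d : Fin 2 →₀ ℕ) :
    MvPowerSeries.coeff d (W0s k) =
      (if d 1 = 0 then (Nat.card (WSol k (d 0) 0) : ℤ) else 0) := rfl

lemma coeff_Zs (m : ℕ) (d : Fin 2 →₀ ℕ) :
    MvPowerSeries.coeff d (Zs m) =
      (if d 1 = 0 then (Nat.card (USol m (d 0) 0) : ℤ) else 0) := rfl

lemma coeff_Gstar (k : ℕ) (d : Fin 2 →₀ ℕ) :
    MvPowerSeries.coeff d (Gstar (k+1)) = (Nat.card (GSolN k (d 0) (d 1)) : ℤ) := by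
  have h : MvPowerSeries.coeff d (Gstar (k+1)) =
      (Nat.card {p : (Fin (k+1) → ℕ) × (Fin (k+1) → ℕ) //
      (∀ i : Fin (k+1), ∑ t ∈ Finset.univ.filter (fun t => i ≤ t), p.2 t ≤
                    ∑ t ∈ Finset.univ.filter (fun t => i ≤ t), p.1 t) ∧
      (∀ _ : 0 < k+1, p.1 ⟨k+1 - 1, by omega⟩ = d 1) ∧
      (∑ i ∈ Finset.univ.filter (fun i : Fin (k+1) => (i : ℕ) + 1 < k+1),
          ((i : ℕ) + 1) * p.1 i) + (∑ i : Fin (k+1), ((i : ℕ) + 1) * p.2 i) = d 0} : ℤ) := rfl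
  rw [h, card_GSol]

/-! ### the series recursions -/

lemma E1s (k : ℕ) : Gstar (k+1) = mon (k+1) 1 * Gstar (k+1) + Us k := by
  apply MvPowerSeries.ext
  intro d
  rw [map_add, coeff_mon_mul, coeff_Gstar, coeff_Us, coeff_Gstar,
    N1 k (d 0) (d 1), sub_fd_apply0, sub_fd_apply1]
  push_cast
  split_ifs <;> ring

lemma E2s (k : ℕ) :
    Us (k+1) = mon (k+1) 1 * Us (k+1) + Ws k + mon ((k+1)+(k+1)) 0 * Zs (k+1) := by
  apply MvPowerSeries.ext
  intro d
  rw [map_add, map_add, coeff_mon_mul, coeff_mon_mul, coeff_Us, coeff_Us, coeff_Ws,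
    coeff_Zs]
  simp only [sub_fd_apply0, sub_fd_apply1]
  rcases Nat.eq_zero_or_pos (d 1) with h1 | h1
  · rw [h1, N2b k (d 0)]
    push_cast
    simp only [and_false, and_true, false_and, true_and, if_false, if_true]
    try (split_ifs <;> omega)
    try omega
  · obtain ⟨L, hL⟩ : ∃ L, d 1 = L + 1 := ⟨d 1 - 1, by omega⟩
    rw [hL]
    simp only [Nat.add_sub_cancel, Nat.sub_zero]
    rw [N2a k (d 0) L]
    push_cast
    simp only [and_false, and_true, false_and, true_and, if_false, if_true]
    try (split_ifs <;> omega)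
    try omega

lemma E3s (k : ℕ) :
    mon 0 1 * Ws k + mon (k+1) 0 * W0s k = mon 0 1 * Us k + mon (k+1) 0 * Ws k := by
  apply MvPowerSeries.ext
  intro d
  rw [map_add, map_add, coeff_mon_mul, coeff_mon_mul, coeff_mon_mul, coeff_mon_mul,
    coeff_Ws, coeff_W0s, coeff_Us, coeff_Ws]
  simp only [sub_fd_apply0, sub_fd_apply1]
  rcases Nat.eq_zero_or_pos (d 1) with h1 | h1
  · rw [h1]
    simp only [Nat.sub_zero, and_false, and_true, false_and, true_and, if_false, if_true]
    split_ifs <;> omega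
  · obtain ⟨L, hL⟩ : ∃ L, d 1 = L + 1 := ⟨d 1 - 1, by omega⟩
    rw [hL]
    simp only [Nat.add_sub_cancel, Nat.sub_zero]
    rw [N3 k (d 0) L]
    push_cast
    simp only [and_false, and_true, false_and, true_and, if_false, if_true]
    try (split_ifs <;> omega)
    try omega

lemma E4s (k : ℕ) :
    Zs (k+1) = W0s k + mon ((k+1)+(k+1)) 0 * Zs (k+1) := by
  apply MvPowerSeries.ext
  intro d
  rw [map_add, coeff_mon_mul, coeff_Zs, coeff_W0s, coeff_Zs]
  simp only [sub_fd_apply0, sub_fd_apply1, Nat.sub_zero]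
  rcases Nat.eq_zero_or_pos (d 1) with h1 | h1
  · rw [h1, N2b k (d 0)]
    push_cast
    simp only [and_false, and_true, false_and, true_and, if_false, if_true]
    try (split_ifs <;> omega)
    try omega
  · split_ifs <;> omega

/-! ### the substitution operator `ev m : s ↦ q^m` -/

def ev (m : ℕ) (F : MvPowerSeries (Fin 2) ℤ) : MvPowerSeries (Fin 2) ℤ :=
  fun d => if d 1 = 0 then ∑ v ∈ Finset.range (d 0 + 1),
    (if m * v ≤ d 0 then MvPowerSeries.coeff (fd (d 0 - m * v) v) F else 0) else 0

lemma coeff_ev (m : ℕ) (F : MvPowerSeries (Fin 2) ℤ) (d : Fin 2 →₀ ℕ) :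
    MvPowerSeries.coeff d (ev m F) =
      if d 1 = 0 then ∑ v ∈ Finset.range (d 0 + 1),
        (if m * v ≤ d 0 then MvPowerSeries.coeff (fd (d 0 - m * v) v) F else 0)
      else 0 := rfl

lemma ev_sub (m : ℕ) (F G : MvPowerSeries (Fin 2) ℤ) :
    ev m (F - G) = ev m F - ev m G := by
  apply MvPowerSeries.ext
  intro d
  rw [map_sub, coeff_ev, coeff_ev, coeff_ev]
  split_ifs with h
  · rw [← Finset.sum_sub_distrib]
    refine Finset.sum_congr rfl (fun v hv => ?_)
    split_ifs with h2
    · rw [map_sub]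
    · ring
  · ring

lemma ev_one (m : ℕ) : ev m 1 = 1 := by
  apply MvPowerSeries.ext
  intro d
  rw [coeff_ev, MvPowerSeries.coeff_one]
  by_cases h1 : d 1 = 0
  · rw [if_pos h1]
    have hterm : ∀ v ∈ Finset.range (d 0 + 1),
        (if m * v ≤ d 0 then MvPowerSeries.coeff (fd (d 0 - m*v) v) 1 else 0)
          = if v = 0 then (if d 0 = 0 then (1:ℤ) else 0) else 0 := by
      intro v hv
      rw [MvPowerSeries.coeff_one]
      simp only [fd_eq_zero_iff]
      by_cases hv0 : v = 0
      · subst hv0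
        simp only [Nat.mul_zero, Nat.sub_zero, and_true]
        split_ifs <;> omega
      · split_ifs <;> omega
    rw [Finset.sum_congr rfl hterm,
      Finset.sum_ite_eq' (Finset.range (d 0 + 1)) 0 (fun _ => if d 0 = 0 then (1:ℤ) else 0),
      if_pos (Finset.mem_range.2 (by omega))]
    simp only [d_eq_zero_iff, h1, and_true]
  · rw [if_neg h1, if_neg (fun hc => h1 ((d_eq_zero_iff d).1 hc).2)]

lemma ev_mon_mul {m : ℕ} (hm : 1 ≤ m) (x y : ℕ) (F : MvPowerSeries (Fin 2) ℤ) :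
    ev m (mon x y * F) = mon (x + m*y) 0 * ev m F := by
  have hy : y ≤ m * y := Nat.le_mul_of_pos_left _ (by omega)
  apply MvPowerSeries.ext
  intro d
  rw [coeff_ev, coeff_mon_mul]
  by_cases h1 : d 1 = 0
  · rw [if_pos h1]
    have hterm : ∀ v ∈ Finset.range (d 0 + 1),
        (if m * v ≤ d 0 then MvPowerSeries.coeff (fd (d 0 - m*v) v) (mon x y * F) else 0)
          = if (y ≤ v ∧ m*v + x ≤ d 0) then
              MvPowerSeries.coeff (fd (d 0 - m*v - x) (v - y)) F else 0 := by
      intro v hv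
      rw [coeff_mon_mul]
      simp only [fd_apply0, fd_apply1]
      have hsub : (fd (d 0 - m*v) v) - fd x y = fd (d 0 - m*v - x) (v - y) :=
        fd_ext (by simp) (by simp)
      rw [hsub]
      split_ifs <;> first | rfl | omega
    rw [Finset.sum_congr rfl hterm]
    by_cases hw : x + m*y ≤ d 0
    · rw [if_pos ⟨hw, Nat.zero_le _⟩, coeff_ev]
      have e1 : (d - fd (x + m*y) 0) 1 = 0 := by simp [h1]
      have e0 : (d - fd (x + m*y) 0) 0 = d 0 - (x + m*y) := by simp
      rw [e1, e0, if_pos rfl]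
      -- reindex the left sum
      have hyd : y ≤ d 0 + 1 := by omega
      conv_lhs => rw [Finset.range_eq_Ico]
      rw [← Finset.sum_Ico_consecutive _ (Nat.zero_le y) hyd]
      have hzero1 : (∑ v ∈ Finset.Ico 0 y,
          (if (y ≤ v ∧ m*v + x ≤ d 0) then
            MvPowerSeries.coeff (fd (d 0 - m*v - x) (v - y)) F else 0)) = 0 := by
        refine Finset.sum_eq_zero (fun v hv => ?_)
        rw [Finset.mem_Ico] at hv
        rw [if_neg (by omega)]
      rw [hzero1, zero_add, Finset.sum_Ico_eq_sum_range]
      have hrange : Finset.range (d 0 - (x + m*y) + 1) ⊆ Finset.range (d 0 + 1 - y) := by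
        intro i hi
        rw [Finset.mem_range] at hi ⊢
        omega
      rw [← Finset.sum_subset hrange ?zero]
      case zero =>
        intro i hi his
        rw [Finset.mem_range] at hi
        rw [Finset.mem_range, not_lt] at his
        rw [if_neg]
        rintro ⟨-, hc⟩
        rw [Nat.mul_add] at hc
        have : i ≤ m * i := Nat.le_mul_of_pos_left _ (by omega)
        omega
      refine Finset.sum_congr rfl (fun i hi => ?_)
      rw [Finset.mem_range] at hi
      have hcond : (y ≤ y + i ∧ m*(y+i) + x ≤ d 0) ↔ (m*i ≤ d 0 - (x + m*y)) := by
        rw [Nat.mul_add]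
        omega
      split_ifs with c1 c2 c3
      · have harg : fd (d 0 - m*(y+i) - x) (y + i - y) = fd (d 0 - (x+m*y) - m*i) i := by
          apply fd_ext
          · simp only [fd_apply0]
            rw [Nat.mul_add]
            omega
          · simp only [fd_apply1]
            omega
        rw [harg]
      · exact absurd (hcond.1 c1) c2
      · exact absurd (hcond.2 c3) c1
      · rfl
    · rw [if_neg (fun hc => hw hc.1)]
      refine Finset.sum_eq_zero (fun v hv => ?_)
      rw [if_neg]
      rintro ⟨hyv, hmv⟩
      have := Nat.mul_le_mul_left m hyv
      omega
  · rw [if_neg h1, coeff_ev]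
    have e1 : (d - fd (x + m*y) 0) 1 = d 1 := by simp
    rw [e1, if_neg h1]
    split_ifs <;> simp

lemma ev_mon {m : ℕ} (hm : 1 ≤ m) (x y : ℕ) : ev m (mon x y) = mon (x + m*y) 0 := by
  rw [← mul_one (mon x y), ev_mon_mul hm, ev_one, mul_one]

lemma ev_mul_one_sub_mon {m : ℕ} (hm : 1 ≤ m) (F : MvPowerSeries (Fin 2) ℤ) (x y : ℕ) :
    ev m (F * (1 - mon x y)) = ev m F * (1 - mon (x + m*y) 0) := by
  have h : F * (1 - mon x y) = F - mon x y * F := by ring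
  rw [h, ev_sub, ev_mon_mul hm]
  ring

def Qm (r : ℕ) : MvPowerSeries (Fin 2) ℤ :=
  ∏ t ∈ Finset.range r, ((1 - mon (t+1) 0) * (1 - mon (t+2) 0))

lemma ev_mul_Qm {m : ℕ} (hm : 1 ≤ m) (F : MvPowerSeries (Fin 2) ℤ) (r : ℕ) :
    ev m (F * Qm r) = ev m F * Qm r := by
  induction r with
  | zero =>
    rw [Qm, Finset.prod_range_zero, mul_one, mul_one]
  | succ r ih =>
    have hq : Qm (r+1) = Qm r * ((1 - mon (r+1) 0) * (1 - mon (r+2) 0)) :=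
      Finset.prod_range_succ _ _
    have h2 : F * Qm (r+1) = ((F * Qm r) * (1 - mon (r+1) 0)) * (1 - mon (r+2) 0) := by
      rw [hq]; ring
    rw [h2, ev_mul_one_sub_mon hm, ev_mul_one_sub_mon hm, ih, hq]
    simp only [Nat.mul_zero, Nat.add_zero]
    ring

lemma E5s (k : ℕ) : ev (k+1) (Us k) = W0s k := by
  apply MvPowerSeries.ext
  intro d
  rw [coeff_ev, coeff_W0s]
  by_cases h1 : d 1 = 0
  · rw [if_pos h1, if_pos h1, N5 k (d 0)]
    push_cast
    refine Finset.sum_congr rfl (fun v hv => ?_)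
    rw [coeff_Us]
    simp only [fd_apply0, fd_apply1]
  · rw [if_neg h1, if_neg h1]
/-! ### nonvanishing lemmas -/

lemma one_sub_mon_ne (x y : ℕ) (h : ¬(x = 0 ∧ y = 0)) :
    (1 : MvPowerSeries (Fin 2) ℤ) - mon x y ≠ 0 := by
  intro hc
  have h2 := congrArg (MvPowerSeries.coeff 0) hc
  rw [map_sub, MvPowerSeries.coeff_one, coeff_mon, map_zero, if_pos rfl,
    if_neg (fun hc2 : (0 : Fin 2 →₀ ℕ) = fd x y =>
      h ((fd_eq_zero_iff x y).1 hc2.symm))] at h2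
  norm_num at h2

lemma s_sub_q_ne (j : ℕ) : mon 0 1 - mon (j+1) 0 ≠ 0 := by
  intro hc
  have h2 := congrArg (MvPowerSeries.coeff (fd 0 1)) hc
  rw [map_sub, coeff_mon, coeff_mon, map_zero, if_pos rfl, if_neg] at h2
  · norm_num at h2
  · intro hc2
    have h3 := congrArg (fun f : Fin 2 →₀ ℕ => f 1) hc2
    simp at h3

/-! ### the base case -/

lemma U0 : Us 0 * (1 - mon 0 1) = 1 := by
  have h : Us 0 * (1 - mon 0 1) = Us 0 - mon 0 1 * Us 0 := by ring
  rw [h]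
  apply MvPowerSeries.ext
  intro d
  rw [map_sub, coeff_mon_mul, coeff_Us, coeff_Us, MvPowerSeries.coeff_one]
  simp only [sub_fd_apply0, sub_fd_apply1, Nat.sub_zero]
  rw [N0 (d 0) (d 1), N0 (d 0) (d 1 - 1)]
  push_cast
  simp only [d_eq_zero_iff, Nat.zero_le, true_and]
  split_ifs <;> omega

/-! ### the main induction -/

lemma Smain : ∀ k, Us k * ((1 - mon 0 1) * (1 - mon 1 1) * Qm k) = 1 - mon (k+1) 1 := by
  intro k
  induction k with
  | zero =>
    show Us 0 * ((1 - mon 0 1) * (1 - mon 1 1) * Qm 0) = 1 - mon 1 1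
    rw [Qm, Finset.prod_range_zero]
    linear_combination (1 - mon 1 1) * U0
  | succ k ih =>
    have hm : (1:ℕ) ≤ k + 1 := by omega
    have hsq : mon 0 1 * mon 1 0 = mon 1 1 := by rw [mon_mul_mon]
    have hst : mon 0 1 * mon (k+1) 0 = mon (k+1) 1 := by
      rw [mon_mul_mon, show 0+(k+1) = k+1 from by omega]
    have htt : mon (k+1) 0 * mon (k+1) 0 = mon ((k+1)+(k+1)) 0 := by rw [mon_mul_mon]
    have htq : mon (k+1) 0 * mon 1 0 = mon (k+2) 0 := by rw [mon_mul_mon]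
    have hstq : mon 0 1 * (mon (k+1) 0 * mon 1 0) = mon (k+1+1) 1 := by
      rw [htq, mon_mul_mon, show 0+(k+2) = k+1+1 from by omega]
    -- the specialized identity (Tm)
    have ihe := congrArg (ev (k+1)) ih
    have assoc : Us k * ((1 - mon 0 1) * (1 - mon 1 1) * Qm k)
        = ((Us k * (1 - mon 0 1)) * (1 - mon 1 1)) * Qm k := by ring
    rw [assoc, ev_mul_Qm hm, ev_mul_one_sub_mon hm, ev_mul_one_sub_mon hm, E5s,
      ev_sub, ev_one, ev_mon hm] at ihe
    rw [show 0 + (k+1)*1 = k+1 from by ring, show 1 + (k+1)*1 = k+2 from by ring,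
      show (k+1) + (k+1)*1 = (k+1)+(k+1) from by ring] at ihe
    rw [← htq, ← htt] at ihe
    -- the recursions
    have e2 := E2s k
    have e3 := E3s k
    have e4 := E4s k
    rw [← hst, ← htt] at e2
    rw [← htt] at e4
    rw [← hsq, ← hst] at ih
    -- assemble
    have h4 : ((mon 0 1 - mon (k+1) 0) * (1 - mon 0 1 * mon (k+1) 0)
          * (1 - mon (k+1) 0 * mon (k+1) 0)) * Us (k+1)
        = (1 - mon (k+1) 0 * mon (k+1) 0)
            * (mon 0 1 * Us k - mon (k+1) 0 * W0s k)
          + (mon 0 1 - mon (k+1) 0) * (mon (k+1) 0 * mon (k+1) 0) * W0s k := by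
      linear_combination (mon 0 1 - mon (k+1) 0) * (1 - mon (k+1) 0 * mon (k+1) 0) * e2
        + (1 - mon (k+1) 0 * mon (k+1) 0) * e3
        + (mon 0 1 - mon (k+1) 0) * (mon (k+1) 0 * mon (k+1) 0) * e4
    have hQ : Qm (k+1) = Qm k * ((1 - mon (k+1) 0) * (1 - mon (k+2) 0)) :=
      Finset.prod_range_succ _ _
    rw [hQ]
    rw [show mon (k+1+1) 1 = mon 0 1 * (mon (k+1) 0 * mon 1 0) from hstq.symm,
      show mon (k+2) 0 = mon (k+1) 0 * mon 1 0 from htq.symm,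
      show mon 1 1 = mon 0 1 * mon 1 0 from hsq.symm]
    have hD : ((mon 0 1 - mon (k+1) 0) * (1 - mon 0 1 * mon (k+1) 0)
        * (1 - mon (k+1) 0 * mon (k+1) 0)) ≠ 0 := by
      refine mul_ne_zero (mul_ne_zero (s_sub_q_ne k) ?_) ?_
      · rw [hst]
        exact one_sub_mon_ne _ _ (by omega)
      · rw [htt]
        exact one_sub_mon_ne _ _ (by omega)
    apply mul_left_cancel₀ hD
    linear_combination
      ((1 - mon 0 1) * (1 - mon 0 1 * mon 1 0) * Qm k * (1 - mon (k+1) 0)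
        * (1 - mon (k+1) 0 * mon 1 0)) * h4
      + ((1 - mon (k+1) 0 * mon (k+1) 0) * mon 0 1 * (1 - mon (k+1) 0)
        * (1 - mon (k+1) 0 * mon 1 0)) * ih
      + ((mon 0 1 * (mon (k+1) 0 * mon (k+1) 0) - mon (k+1) 0) * (1 - mon 0 1)
        * (1 - mon 0 1 * mon 1 0)) * ihe


/-- `G*ₙ(q,s) = 1/((1−s)(1−sq)(q;q)_{n−1}(q²;q)_{n−1})`, with denominators
cleared. -/
theorem Gstar_closed_form (n : ℕ) (hn : 1 ≤ n) :
    Gstar n * (1 - MvPowerSeries.X (1 : Fin 2)) *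
      (1 - MvPowerSeries.X (1 : Fin 2) * MvPowerSeries.X (0 : Fin 2)) *
      (∏ t ∈ Finset.range (n - 1), (1 - MvPowerSeries.X (0 : Fin 2) ^ (t + 1))) *
      (∏ t ∈ Finset.range (n - 1), (1 - MvPowerSeries.X (0 : Fin 2) ^ (t + 2)))
      = 1 := by
  obtain ⟨k, rfl⟩ : ∃ k, n = k + 1 := ⟨n - 1, by omega⟩
  rw [show k + 1 - 1 = k from rfl]
  have hprod : (∏ t ∈ Finset.range k, (1 - MvPowerSeries.X (0 : Fin 2) ^ (t + 1))) *
      (∏ t ∈ Finset.range k, (1 - MvPowerSeries.X (0 : Fin 2) ^ (t + 2))) = Qm k := by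
    rw [Qm, ← Finset.prod_mul_distrib]
    refine Finset.prod_congr rfl (fun t _ => ?_)
    rw [X0_pow, X0_pow]
  rw [show Gstar (k+1) * (1 - MvPowerSeries.X (1 : Fin 2)) *
      (1 - MvPowerSeries.X (1 : Fin 2) * MvPowerSeries.X (0 : Fin 2)) *
      (∏ t ∈ Finset.range k, (1 - MvPowerSeries.X (0 : Fin 2) ^ (t + 1))) *
      (∏ t ∈ Finset.range k, (1 - MvPowerSeries.X (0 : Fin 2) ^ (t + 2)))
    = Gstar (k+1) * ((1 - MvPowerSeries.X (1 : Fin 2)) *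
      (1 - MvPowerSeries.X (1 : Fin 2) * MvPowerSeries.X (0 : Fin 2)) *
      ((∏ t ∈ Finset.range k, (1 - MvPowerSeries.X (0 : Fin 2) ^ (t + 1))) *
      (∏ t ∈ Finset.range k, (1 - MvPowerSeries.X (0 : Fin 2) ^ (t + 2))))) from by ring,
    hprod, X1_eq, X0_eq, show mon 0 1 * mon 1 0 = mon 1 1 from by rw [mon_mul_mon]]
  have e1 := E1s k
  have hS := Smain k
  have hne : (1 : MvPowerSeries (Fin 2) ℤ) - mon (k+1) 1 ≠ 0 :=
    one_sub_mon_ne _ _ (by omega)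
  apply mul_left_cancel₀ hne
  linear_combination ((1 - mon 0 1) * (1 - mon 1 1) * Qm k) * e1 + hS
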